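/- Let A be a C*-algebra, let J ◁ A be a closed two-sided ideal, and let C ⊂ A be a sub-C*-algebra. Assume K ⊂ J is a sub-C*-algebra containing C ∩ J such that the inclusion C ∩ J ⊂ K is proper. Then K is a closed two-sided ideal in the sub-C*-algebra C*(K, C) ⊂ A generated by K and C, and there is a natural *-isomorphism C*(K, C)/K ≅ C/(C ∩ J) induced by the quotient map A → A/J. -/

import Mathlib

noncomputable section

open scoped Topology

universe u v w

/-! ### Covering dimension, local dimension, almost Hausdorff spaces -/

/-- `HasCovDimLE X n` : every finite open cover of `X` has a finite open refinement
of order at most `n + 1`, i.e. the covering dimension of `X` is at most `n`. -/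
def HasCovDimLE (X : Type*) [TopologicalSpace X] (n : ℕ) : Prop :=
  ∀ U : Set (Set X), U.Finite → (∀ u ∈ U, IsOpen u) → ⋃₀ U = Set.univ →
    ∃ V : Set (Set X), V.Finite ∧ (∀ v ∈ V, IsOpen v) ∧ ⋃₀ V = Set.univ ∧
      (∀ v ∈ V, ∃ u ∈ U, v ⊆ u) ∧ ∀ x : X, Set.ncard {v ∈ V | x ∈ v} ≤ n + 1

/-- The covering dimension of a topological space, valued in `ℕ∞`. -/
def covDim (X : Type*) [TopologicalSpace X] : ℕ∞ :=
  sInf {m : ℕ∞ | ∃ n : ℕ, m = (n : ℕ∞) ∧ HasCovDimLE X n}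

/-- `HasLocDimLE X n` : every point has a closed neighborhood of covering dimension `≤ n`. -/
def HasLocDimLE (X : Type*) [TopologicalSpace X] (n : ℕ) : Prop :=
  ∀ x : X, ∃ F : Set X, F ∈ 𝓝 x ∧ IsClosed F ∧ HasCovDimLE F n

/-- The local covering dimension of a topological space, valued in `ℕ∞`. -/
def locDim (X : Type*) [TopologicalSpace X] : ℕ∞ :=
  sInf {m : ℕ∞ | ∃ n : ℕ, m = (n : ℕ∞) ∧ HasLocDimLE X n}

/-- A space is almost Hausdorff if every non-empty closed subset contains a non-empty
relatively open subset which is Hausdorff. -/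
def AlmostHausdorff (X : Type*) [TopologicalSpace X] : Prop :=
  ∀ F : Set X, IsClosed F → F.Nonempty →
    ∃ G : Set X, IsOpen G ∧ (F ∩ G).Nonempty ∧ T2Space ↥(F ∩ G)

/-- Map `ℕ∞ → ℕ∞` by a function on `ℕ`, sending `∞` to `∞` (used for floor operations like
`d ↦ ⌊d/2⌋` with the convention `⌊∞/2⌋ = ∞`). -/
def enatMap (f : ℕ → ℕ) (m : ℕ∞) : ℕ∞ :=
  sInf {k : ℕ∞ | ∃ n : ℕ, m = (n : ℕ∞) ∧ k = (f n : ℕ∞)}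

/-! ### Sub-C*-algebras, ideals, hereditary and full subalgebras, approximation -/

section Subalgebras

variable {A : Type u} [NonUnitalCStarAlgebra A]

/-- `IsIdealIn J D` : `J` is a two-sided ideal in the subalgebra `D` (both regarded as
subalgebras of an ambient C*-algebra). Closed two-sided ideals of a C*-algebra are
automatically star-closed, so representing ideals as star subalgebras is no loss. -/
def IsIdealIn (J D : NonUnitalStarSubalgebra ℂ A) : Prop :=
  J ≤ D ∧ ∀ a ∈ D, ∀ x ∈ J, a * x ∈ J ∧ x * a ∈ J

/-- `IsHereditaryIn B D` : `B` is a hereditary subalgebra of the subalgebra `D`: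
whenever `a ∈ D`, `b ∈ B` and `0 ≤ a ≤ b`, then `a ∈ B`. -/
def IsHereditaryIn [PartialOrder A] [StarOrderedRing A]
    (B D : NonUnitalStarSubalgebra ℂ A) : Prop :=
  B ≤ D ∧ ∀ a ∈ D, ∀ b ∈ B, 0 ≤ a → a ≤ b → a ∈ B

/-- `IsFullIn B D` : `B` is a full subalgebra of the subalgebra `D`, i.e. `B` is contained
in no proper closed two-sided ideal of `D`. -/
def IsFullIn (B D : NonUnitalStarSubalgebra ℂ A) : Prop :=
  B ≤ D ∧ ∀ J : NonUnitalStarSubalgebra ℂ A,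
    IsClosed (J : Set A) → IsIdealIn J D → B ≤ J → D ≤ J

/-- A family of subalgebras approximates `A` if every finite subset of `A` is within `ε`
of one of the subalgebras, for every `ε > 0`. -/
def ApproximatedBy {ι : Sort v} (S : ι → NonUnitalStarSubalgebra ℂ A) : Prop :=
  ∀ F : Finset A, ∀ ε : ℝ, 0 < ε → ∃ i, ∀ x ∈ F, ∃ y ∈ S i, ‖x - y‖ < ε

/-- `ProperlyIncluded s t` : positive contractions of `s` form an approximate unit for `t`;
this is the meaning of "the inclusion `s ⊆ t` is proper". Positivity of `c` is expressed as
`c = star b * b`. -/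
def ProperlyIncluded (s t : Set A) : Prop :=
  s ⊆ t ∧ ∀ x ∈ t, ∀ ε : ℝ, 0 < ε →
    ∃ c ∈ s, (∃ b : A, c = star b * b) ∧ ‖c‖ ≤ 1 ∧ ‖c * x * c - x‖ < ε

end Subalgebras

/-- A bundled (non-unital) C*-algebra, used to quantify existentially over C*-algebras. -/
structure CStarAlgebraBundle : Type (u + 1) where
  carrier : Type u
  [str : NonUnitalCStarAlgebra carrier]

attribute [instance] CStarAlgebraBundle.str

/-- A bundled C*-algebra together with its canonical partial order (in which `0 ≤ a` iff
`a` is a sum of elements `star x * x`; such an order is unique when it exists). -/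
structure OrderedCStarAlgebraBundle : Type (u + 1) where
  carrier : Type u
  [str : NonUnitalCStarAlgebra carrier]
  [po : PartialOrder carrier]
  [sor : StarOrderedRing carrier]

attribute [instance] OrderedCStarAlgebraBundle.str OrderedCStarAlgebraBundle.po
  OrderedCStarAlgebraBundle.sor

/-! ### Representations, the primitive ideal space, CCR and type I algebras -/

/-- A representation of `A` on a complex Hilbert space (in the same universe as `A`). -/
structure HilbertRep (A : Type u) [NonUnitalCStarAlgebra A] : Type (u + 1) where
  H : Type u
  [normedAddCommGroup : NormedAddCommGroup H]
  [innerProductSpace : InnerProductSpace ℂ H]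
  [completeSpace : CompleteSpace H]
  π : A →⋆ₙₐ[ℂ] (H →L[ℂ] H)

attribute [instance] HilbertRep.normedAddCommGroup HilbertRep.innerProductSpace
  HilbertRep.completeSpace

variable {A : Type u} [NonUnitalCStarAlgebra A]

/-- (Topological) irreducibility: the representation is non-zero and has no non-trivial
closed invariant subspace. -/
def HilbertRep.IsIrreducible (ρ : HilbertRep A) : Prop :=
  (∃ a, ρ.π a ≠ 0) ∧ ∀ K : Submodule ℂ ρ.H, IsClosed (K : Set ρ.H) →
    (∀ a : A, ∀ x ∈ K, ρ.π a x ∈ K) → K = ⊥ ∨ K = ⊤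

/-- The kernel of a representation, as a subset of `A`. -/
def HilbertRep.ker (ρ : HilbertRep A) : Set A := {a : A | ρ.π a = 0}

/-- A primitive ideal is the kernel of an irreducible representation. -/
def IsPrimitiveIdeal (A : Type u) [NonUnitalCStarAlgebra A] (I : Set A) : Prop :=
  ∃ ρ : HilbertRep A, ρ.IsIrreducible ∧ I = ρ.ker

/-- The primitive ideal space of `A`. -/
def PrimSpace (A : Type u) [NonUnitalCStarAlgebra A] : Type u :=
  {I : Set A // IsPrimitiveIdeal A I}

/-- The hull-kernel (Jacobson) topology on `Prim(A)`: the closed sets are the sets of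
primitive ideals containing a given subset of `A`. -/
instance (A : Type u) [NonUnitalCStarAlgebra A] : TopologicalSpace (PrimSpace A) :=
  TopologicalSpace.generateFrom
    {U : Set (PrimSpace A) | ∃ S : Set A, U = {I : PrimSpace A | ¬ S ⊆ I.1}}

/-- The topological dimension of a C*-algebra: the supremum of the local covering dimensions
of all locally closed Hausdorff subsets of `Prim(A)`. -/
def topDim (A : Type u) [NonUnitalCStarAlgebra A] : ℕ∞ :=
  ⨆ S : {S : Set (PrimSpace A) // IsLocallyClosed S ∧ T2Space ↥S}, locDim ↥S.1

/-- `T` is a rank-one projection. -/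
def IsRankOneProjection {H : Type*} [NormedAddCommGroup H] [InnerProductSpace ℂ H]
    [CompleteSpace H] (T : H →L[ℂ] H) : Prop :=
  IsSelfAdjoint T ∧ T * T = T ∧ Module.finrank ℂ (LinearMap.range (T : H →ₗ[ℂ] H)) = 1

/-- A C*-algebra is CCR (liminal) if every irreducible representation takes values in the
compact operators. -/
def IsCCR (A : Type u) [NonUnitalCStarAlgebra A] : Prop :=
  ∀ ρ : HilbertRep A, ρ.IsIrreducible → ∀ a : A, IsCompactOperator ⇑(ρ.π a)

/-- `A` has continuous trace: the spectrum (identified with `Prim(A)`, as continuous trace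
algebras are CCR) is Hausdorff and Fell's condition holds. -/
def HasContinuousTrace (A : Type u) [NonUnitalCStarAlgebra A] : Prop :=
  T2Space (PrimSpace A) ∧
    ∀ I : PrimSpace A, ∃ U ∈ 𝓝 I, ∃ a : A, (∃ b : A, a = star b * b) ∧
      ∀ J : PrimSpace A, J ∈ U → ∀ ρ : HilbertRep A, ρ.IsIrreducible → ρ.ker = J.1 →
        IsRankOneProjection (ρ.π a)

/-- A composition series for `A` of length `μ` : an increasing, ordinal-indexed family of
closed two-sided ideals with `J μ = A`, continuous at limit ordinals. -/
def IsCompositionSeries (A : Type u) [NonUnitalCStarAlgebra A] (μ : Ordinal.{u})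
    (J : Ordinal.{u} → NonUnitalStarSubalgebra ℂ A) : Prop :=
  (∀ α, α ≤ μ → IsClosed ((J α : Set A))) ∧
  (∀ α, α ≤ μ → IsIdealIn (J α) ⊤) ∧
  (∀ α β, α ≤ β → β ≤ μ → J α ≤ J β) ∧
  J μ = ⊤ ∧
  ∀ α, α ≤ μ → Order.IsSuccLimit α →
    (J α : Set A) = closure (⋃ γ : {γ : Ordinal.{u} // γ < α}, (J γ.1 : Set A))

/-- The quotient `J' / J` is a CCR algebra, phrased via a surjective star homomorphism out of
`J'` with kernel `J`. -/
def QuotientIsCCR (J' J : NonUnitalStarSubalgebra ℂ A) : Prop :=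
  ∃ B : CStarAlgebraBundle.{u}, ∃ φ : J' →⋆ₙₐ[ℂ] B.carrier,
    Function.Surjective φ ∧ (∀ x : J', φ x = 0 ↔ (x : A) ∈ J) ∧ IsCCR B.carrier

/-- A C*-algebra is type I (postliminal) if it has a composition series starting at `0`
whose successive quotients are CCR. -/
def IsTypeI (A : Type u) [NonUnitalCStarAlgebra A] : Prop :=
  ∃ μ : Ordinal.{u}, ∃ J : Ordinal.{u} → NonUnitalStarSubalgebra ℂ A,
    IsCompositionSeries A μ J ∧ J 0 = ⊥ ∧
      ∀ α, α < μ → QuotientIsCCR (J (α + 1)) (J α)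

/-! ### Noncommutative dimension theories -/

open TopologicalSpace in
/-- `IsDimTheory Mem d` : `d` is a noncommutative dimension theory for the class `Mem` of
C*-algebras (`d` is defined as a total function; only its values on `Mem` matter). The
fields record that `Mem` is closed under isomorphism, ideals, quotients, finite direct sums
and minimal unitizations, that `d` is isomorphism invariant, and axioms (D1)-(D6). -/
structure IsDimTheory (Mem : ∀ (A : Type u) [NonUnitalCStarAlgebra A], Prop)
    (d : ∀ (A : Type u) [NonUnitalCStarAlgebra A], ℕ∞) : Prop where
  mem_iso : ∀ (A B : Type u) [NonUnitalCStarAlgebra A] [NonUnitalCStarAlgebra B],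
    (A ≃⋆ₐ[ℂ] B) → Mem A → Mem B
  mem_ideal : ∀ (A : Type u) [NonUnitalCStarAlgebra A] (J : NonUnitalStarSubalgebra ℂ A)
    (hJ : IsClosed (J : Set A)), IsIdealIn J ⊤ → Mem A → haveI := hJ; Mem J
  mem_quotient : ∀ (A B : Type u) [NonUnitalCStarAlgebra A] [NonUnitalCStarAlgebra B]
    (φ : A →⋆ₙₐ[ℂ] B), Function.Surjective φ → Mem A → Mem B
  mem_sum : ∀ (A B : Type u) [NonUnitalCStarAlgebra A] [NonUnitalCStarAlgebra B],
    Mem A → Mem B → Mem (A × B)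
  mem_unitization : ∀ (A : Type u) [NonUnitalCStarAlgebra A], Mem A → Mem (Unitization ℂ A)
  d_iso : ∀ (A B : Type u) [NonUnitalCStarAlgebra A] [NonUnitalCStarAlgebra B],
    (A ≃⋆ₐ[ℂ] B) → Mem A → d A = d B
  d1 : ∀ (A : Type u) [NonUnitalCStarAlgebra A] (J : NonUnitalStarSubalgebra ℂ A)
    (hJ : IsClosed (J : Set A)), IsIdealIn J ⊤ → Mem A → haveI := hJ; d J ≤ d A
  d2 : ∀ (A B : Type u) [NonUnitalCStarAlgebra A] [NonUnitalCStarAlgebra B]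
    (φ : A →⋆ₙₐ[ℂ] B), Function.Surjective φ → Mem A → d B ≤ d A
  d3 : ∀ (A B : Type u) [NonUnitalCStarAlgebra A] [NonUnitalCStarAlgebra B],
    Mem A → Mem B → d (A × B) = max (d A) (d B)
  d4 : ∀ (A : Type u) [NonUnitalCStarAlgebra A], Mem A → d (Unitization ℂ A) = d A
  d5 : ∀ (A : Type u) [NonUnitalCStarAlgebra A] (n : ℕ), Mem A →
    ∀ {ι : Type u} (S : ι → NonUnitalStarSubalgebra ℂ A), ApproximatedBy S →
      (∀ i, ∃ hc : IsClosed ((S i : Set A)),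
        haveI := hc; Mem (S i) ∧ d (S i) ≤ (n : ℕ∞)) →
      d A ≤ (n : ℕ∞)
  d6 : ∀ (A : Type u) [NonUnitalCStarAlgebra A] (C : NonUnitalStarSubalgebra ℂ A),
    IsClosed (C : Set A) → SeparableSpace C → Mem A →
      ∃ D : NonUnitalStarSubalgebra ℂ A, ∃ hD : IsClosed ((D : Set A)), C ≤ D ∧
        SeparableSpace D ∧ (haveI := hD; Mem D ∧ d D ≤ d A)

/-! ### Compact operators, stabilization and tensor products -/

/-- The Hilbert space `ℓ²(ℕ)`. -/
abbrev HilbertL2 : Type := lp (fun _ : ℕ => ℂ) 2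

/-- The compact operators on a Hilbert space `H`, as a subalgebra of `H →L[ℂ] H`. -/
def compactsSubalg (H : Type*) [NormedAddCommGroup H] [InnerProductSpace ℂ H]
    [CompleteSpace H] : NonUnitalStarSubalgebra ℂ (H →L[ℂ] H) where
  carrier := {T : H →L[ℂ] H | IsCompactOperator ⇑T ∧ IsCompactOperator ⇑(star T)}
  add_mem' := fun hf hg =>
    ⟨by rw [ContinuousLinearMap.coe_add']; exact hf.1.add hg.1,
     by rw [star_add, ContinuousLinearMap.coe_add']; exact hf.2.add hg.2⟩
  zero_mem' :=
    ⟨by rw [ContinuousLinearMap.coe_zero']; exact isCompactOperator_zero,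
     by rw [star_zero, ContinuousLinearMap.coe_zero']; exact isCompactOperator_zero⟩
  mul_mem' := fun {f g} hf hg =>
    ⟨by rw [ContinuousLinearMap.mul_def, ContinuousLinearMap.coe_comp']; exact hf.1.comp_clm g,
     by rw [star_mul, ContinuousLinearMap.mul_def, ContinuousLinearMap.coe_comp']; exact hg.2.comp_clm (star f)⟩
  smul_mem' := fun c {f} hf =>
    ⟨by rw [ContinuousLinearMap.coe_smul']; exact hf.1.smul c,
     by rw [star_smul, ContinuousLinearMap.coe_smul']; exact hf.2.smul (star c)⟩
  star_mem' := fun {f} hf => ⟨hf.2, by rw [star_star]; exact hf.1⟩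

theorem compactsSubalg_isClosed (H : Type*) [NormedAddCommGroup H] [InnerProductSpace ℂ H]
    [CompleteSpace H] : IsClosed ((compactsSubalg H : Set (H →L[ℂ] H))) := by
  have h1 : IsClosed {f : H →L[ℂ] H | IsCompactOperator ⇑f} := isClosed_setOf_isCompactOperator
  have h2 : (compactsSubalg H : Set (H →L[ℂ] H)) =
      {f : H →L[ℂ] H | IsCompactOperator ⇑f} ∩
        (star ⁻¹' {f : H →L[ℂ] H | IsCompactOperator ⇑f}) := rfl
  rw [h2]
  exact h1.inter (h1.preimage continuous_star)

/-- The C*-algebra `𝕂` of compact operators on the separable infinite-dimensional Hilbert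
space `ℓ²(ℕ)`. -/
abbrev KCompact : Type := ↥(compactsSubalg HilbertL2)

noncomputable instance : NonUnitalCStarAlgebra KCompact :=
  haveI := compactsSubalg_isClosed HilbertL2
  NonUnitalStarSubalgebra.nonUnitalCStarAlgebra _

/-- `t` realizes `T` as a C*-tensor product of `A` and `B` : `t` is a bilinear map which is
multiplicative and star preserving on elementary tensors, the induced map on the algebraic
tensor product is injective, and its range is dense in `T`. (For nuclear algebras -- e.g.
type I algebras, or when one factor is `𝕂` -- such a `T` is unique up to isomorphism.) -/
def IsCStarTensorProduct (A : Type u) (B : Type v) (T : Type w) [NonUnitalCStarAlgebra A]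
    [NonUnitalCStarAlgebra B] [NonUnitalCStarAlgebra T] (t : A →ₗ[ℂ] B →ₗ[ℂ] T) : Prop :=
  (∀ (a a' : A) (b b' : B), t a b * t a' b' = t (a * a') (b * b')) ∧
  (∀ (a : A) (b : B), star (t a b) = t (star a) (star b)) ∧
  Function.Injective (TensorProduct.lift t) ∧
  DenseRange ⇑(TensorProduct.lift t)

/-- Two C*-algebras are stably isomorphic if `A ⊗ 𝕂 ≅ B ⊗ 𝕂`. -/
def StablyIsomorphic (A B : Type u) [NonUnitalCStarAlgebra A] [NonUnitalCStarAlgebra B] :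
    Prop :=
  ∃ (TA TB : CStarAlgebraBundle.{u}) (tA : A →ₗ[ℂ] KCompact →ₗ[ℂ] TA.carrier)
    (tB : B →ₗ[ℂ] KCompact →ₗ[ℂ] TB.carrier),
    IsCStarTensorProduct A KCompact TA.carrier tA ∧
    IsCStarTensorProduct B KCompact TB.carrier tB ∧
    Nonempty (TA.carrier ≃⋆ₐ[ℂ] TB.carrier)

/-- Morita equivalence of C*-algebras, via the linking algebra picture: `A` and `B` are
Morita equivalent iff they are isomorphic to full hereditary subalgebras of a common
C*-algebra. -/
def MoritaEquivalent (A B : Type u) [NonUnitalCStarAlgebra A] [NonUnitalCStarAlgebra B] :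
    Prop :=
  ∃ C : OrderedCStarAlgebraBundle.{u},
    ∃ A' B' : NonUnitalStarSubalgebra ℂ C.carrier,
      IsClosed ((A' : Set C.carrier)) ∧ IsClosed ((B' : Set C.carrier)) ∧
      IsHereditaryIn A' ⊤ ∧ IsFullIn A' ⊤ ∧ IsHereditaryIn B' ⊤ ∧ IsFullIn B' ⊤ ∧
      Nonempty (A ≃⋆ₐ[ℂ] A') ∧ Nonempty (B ≃⋆ₐ[ℂ] B')

/-! ### Stable rank, connected stable rank, real rank -/

/-- The stable rank of a C*-algebra (`sr(A) := sr(Ã)`), valued in `ℕ∞` : the least `n` such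
that the `n`-tuples generating `Ã` as a left ideal are dense in `Ãⁿ`. -/
def stableRank (A : Type u) [NonUnitalCStarAlgebra A] : ℕ∞ :=
  sInf {m : ℕ∞ | ∃ n : ℕ, m = (n : ℕ∞) ∧
    Dense {v : Fin n → Unitization ℂ A |
      ∃ c : Fin n → Unitization ℂ A, ∑ i, c i * v i = 1}}

/-- The connected stable rank of a C*-algebra, valued in `ℕ∞`. -/
def connectedStableRank (A : Type u) [NonUnitalCStarAlgebra A] : ℕ∞ :=
  sInf {m : ℕ∞ | ∃ n : ℕ, m = (n : ℕ∞) ∧ ∀ k : ℕ, n ≤ k →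
    IsConnected {v : Fin k → Unitization ℂ A |
      ∃ c : Fin k → Unitization ℂ A, ∑ i, c i * v i = 1}}

/-- The real rank of a C*-algebra, valued in `ℕ∞` : the least `n` such that the
self-adjoint `(n+1)`-tuples generating `Ã` as a left ideal are dense in `(Ã_sa)^(n+1)`. -/
def realRank (A : Type u) [NonUnitalCStarAlgebra A] : ℕ∞ :=
  sInf {m : ℕ∞ | ∃ n : ℕ, m = (n : ℕ∞) ∧
    Dense {v : Fin (n + 1) → selfAdjoint (Unitization ℂ A) |
      ∃ c : Fin (n + 1) → Unitization ℂ A, ∑ i, c i * (v i : Unitization ℂ A) = 1}}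

end


open scoped CStarAlgebra

section AuxSurj
variable {B Q : Type*} [NonUnitalCStarAlgebra B] [NonUnitalCStarAlgebra Q]

lemma aux_sa_approx (φ : B →⋆ₙₐ[ℂ] Q) (hd : DenseRange φ) (q : Q) (hq : IsSelfAdjoint q)
    {δ : ℝ} (hδ : 0 < δ) : ∃ a : B, ‖a‖ ≤ ‖q‖ ∧ ‖φ a - q‖ < δ := by
  obtain ⟨x, hx⟩ := Metric.denseRange_iff.mp hd q (δ/3) (by linarith)
  rw [dist_comm, dist_eq_norm] at hx
  set x' : B := (2:ℂ)⁻¹ • (x + star x) with hx'def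
  have h2 : star ((2:ℂ)⁻¹) = (2:ℂ)⁻¹ := by simp [Complex.star_def]
  have hx'sa : IsSelfAdjoint x' := by
    rw [IsSelfAdjoint, hx'def, star_smul, h2, star_add, star_star, add_comm]
  have hn2 : ‖(2:ℂ)⁻¹‖ = 2⁻¹ := by
    rw [norm_inv]; norm_num
  have hkey : φ x' - q = (2:ℂ)⁻¹ • ((φ x - q) + star (φ x - q)) := by
    rw [star_sub, hq.star_eq, hx'def, map_smul, map_add, map_star]
    module
  have hφx' : ‖φ x' - q‖ ≤ δ/3 := by
    rw [hkey, norm_smul, hn2]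
    calc 2⁻¹ * ‖(φ x - q) + star (φ x - q)‖
        ≤ 2⁻¹ * (‖φ x - q‖ + ‖star (φ x - q)‖) := by
          gcongr; exact norm_add_le _ _
      _ ≤ 2⁻¹ * (δ/3 + δ/3) := by rw [norm_star]; gcongr <;> exact hx.le
      _ = δ/3 := by ring
  set M : ℝ := ‖q‖ with hM
  have hM0 : 0 ≤ M := norm_nonneg q
  set f : ℝ → ℝ := fun t => max (-M) (min M t) with hf
  have hfc : Continuous f := by fun_prop
  have hf0 : f 0 = 0 := by simp [hf, hM0, neg_nonpos.mpr hM0]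
  have hfbd : ∀ t : ℝ, |f t| ≤ M := fun t => abs_le.mpr
    ⟨le_max_left _ _, max_le (neg_le_self hM0) (min_le_left _ _)⟩
  have hφsa : IsSelfAdjoint (φ x') := hx'sa.map φ
  refine ⟨cfcₙ f x', norm_cfcₙ_le fun t _ => hfbd t, ?_⟩
  have hy : ‖φ x'‖ ≤ M + δ/3 := by
    calc ‖φ x'‖ = ‖(φ x' - q) + q‖ := by rw [sub_add_cancel]
      _ ≤ ‖φ x' - q‖ + ‖q‖ := norm_add_le _ _
      _ ≤ M + δ/3 := by rw [← hM]; linarith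
  have hmap : φ (cfcₙ f x') = cfcₙ f (φ x') :=
    NonUnitalStarAlgHom.map_cfcₙ φ f x' (hf := hfc.continuousOn) (hf₀ := hf0)
      (hφ := map_continuous φ) (ha := hx'sa) (hφa := hφsa)
  have hclose : ‖cfcₙ f (φ x') - φ x'‖ ≤ δ/3 := by
    have : cfcₙ f (φ x') - φ x' = cfcₙ (fun t => f t - t) (φ x') := by
      rw [cfcₙ_sub f (fun t : ℝ => t) (φ x') hfc.continuousOn hf0 continuousOn_id rfl,
        cfcₙ_id' ℝ (φ x') hφsa]
    rw [this]
    refine norm_cfcₙ_le fun t ht => ?_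
    have htb : |t| ≤ M + δ/3 := by
      have := norm_apply_le_norm_cfcₙ (fun t : ℝ => t) (φ x') ht continuousOn_id rfl hφsa
      rw [cfcₙ_id' ℝ (φ x') hφsa] at this
      calc |t| = ‖t‖ := rfl
        _ ≤ ‖φ x'‖ := this
        _ ≤ M + δ/3 := hy
    rw [Real.norm_eq_abs]
    rcases le_total t M with h1 | h1
    · rcases le_total (-M) t with h2 | h2
      · have : f t = t := by rw [hf]; simp [min_eq_right h1, max_eq_right h2]
        simp only [this, sub_self, abs_zero]; linarith
      · have : f t = -M := by
          show max (-M) (min M t) = -M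
          rw [min_eq_right (by linarith : t ≤ M)]
          exact max_eq_left h2
        rw [this]
        have := abs_le.mp htb
        rw [abs_le]; constructor <;> linarith
    · have : f t = M := by
        show max (-M) (min M t) = M
        rw [min_eq_left h1, max_eq_right (by linarith : -M ≤ M)]
      rw [this]
      have := abs_le.mp htb
      rw [abs_le]; constructor <;> linarith
  calc ‖φ (cfcₙ f x') - q‖ = ‖(cfcₙ f (φ x') - φ x') + (φ x' - q)‖ := by
        rw [hmap]; congr 1; abel
    _ ≤ ‖cfcₙ f (φ x') - φ x'‖ + ‖φ x' - q‖ := norm_add_le _ _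
    _ ≤ δ/3 + δ/3 := add_le_add hclose hφx'
    _ < δ := by linarith

lemma aux_approx (φ : B →⋆ₙₐ[ℂ] Q) (hd : DenseRange φ) (q : Q)
    {δ : ℝ} (hδ : 0 < δ) : ∃ a : B, ‖a‖ ≤ 2 * ‖q‖ ∧ ‖φ a - q‖ < δ := by
  set q₁ : Q := (2:ℂ)⁻¹ • (q + star q) with hq₁
  set q₂ : Q := (2 * Complex.I)⁻¹ • (q - star q) with hq₂
  have h2 : star ((2:ℂ)⁻¹) = (2:ℂ)⁻¹ := by simp [Complex.star_def]
  have h2I : star ((2 * Complex.I)⁻¹) = -(2 * Complex.I)⁻¹ := by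
    rw [Complex.star_def, map_inv₀, ← inv_neg]
    congr 1
    simp [map_ofNat]
  have hsa₁ : IsSelfAdjoint q₁ := by
    rw [IsSelfAdjoint, hq₁, star_smul, h2, star_add, star_star, add_comm]
  have hsa₂ : IsSelfAdjoint q₂ := by
    rw [IsSelfAdjoint, hq₂, star_smul, h2I, star_sub, star_star, neg_smul, ← smul_neg,
      neg_sub]
  have hdecomp : q = q₁ + Complex.I • q₂ := by
    rw [hq₁, hq₂, smul_smul]
    have h12 : Complex.I * (2 * Complex.I)⁻¹ = (2:ℂ)⁻¹ := by
      rw [mul_inv, Complex.inv_I]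
      rw [show Complex.I * (2⁻¹ * -Complex.I) = 2⁻¹ * -(Complex.I * Complex.I) by ring,
        Complex.I_mul_I]
      ring
    rw [h12]
    module
  have hn₁ : ‖q₁‖ ≤ ‖q‖ := by
    rw [hq₁, norm_smul]
    have : ‖(2:ℂ)⁻¹‖ = 2⁻¹ := by rw [norm_inv]; norm_num
    rw [this]
    calc 2⁻¹ * ‖q + star q‖ ≤ 2⁻¹ * (‖q‖ + ‖star q‖) := by gcongr; exact norm_add_le _ _
      _ = ‖q‖ := by rw [norm_star]; ring
  have hn₂ : ‖q₂‖ ≤ ‖q‖ := by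
    rw [hq₂, norm_smul]
    have : ‖(2 * Complex.I)⁻¹‖ = 2⁻¹ := by
      rw [norm_inv, norm_mul, Complex.norm_I]; norm_num
    rw [this]
    calc 2⁻¹ * ‖q - star q‖ ≤ 2⁻¹ * (‖q‖ + ‖star q‖) := by gcongr; exact norm_sub_le _ _
      _ = ‖q‖ := by rw [norm_star]; ring
  obtain ⟨a₁, ha₁n, ha₁⟩ := aux_sa_approx φ hd q₁ hsa₁ (show (0:ℝ) < δ/2 by linarith)
  obtain ⟨a₂, ha₂n, ha₂⟩ := aux_sa_approx φ hd q₂ hsa₂ (show (0:ℝ) < δ/2 by linarith)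
  refine ⟨a₁ + Complex.I • a₂, ?_, ?_⟩
  · calc ‖a₁ + Complex.I • a₂‖ ≤ ‖a₁‖ + ‖Complex.I • a₂‖ := norm_add_le _ _
      _ = ‖a₁‖ + ‖a₂‖ := by rw [norm_smul, Complex.norm_I, one_mul]
      _ ≤ 2 * ‖q‖ := by linarith
  · have : φ (a₁ + Complex.I • a₂) - q
        = (φ a₁ - q₁) + Complex.I • (φ a₂ - q₂) := by
      rw [map_add, map_smul, hdecomp]
      module
    rw [this]
    calc ‖(φ a₁ - q₁) + Complex.I • (φ a₂ - q₂)‖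
        ≤ ‖φ a₁ - q₁‖ + ‖Complex.I • (φ a₂ - q₂)‖ := norm_add_le _ _
      _ = ‖φ a₁ - q₁‖ + ‖φ a₂ - q₂‖ := by rw [norm_smul, Complex.norm_I, one_mul]
      _ < δ/2 + δ/2 := add_lt_add ha₁ ha₂
      _ = δ := by ring

lemma aux_surj (φ : B →⋆ₙₐ[ℂ] Q) (hd : DenseRange φ) : Function.Surjective φ := by
  intro q
  rcases eq_or_ne q 0 with rfl | hq0
  · exact ⟨0, map_zero φ⟩
  have hqn : (0:ℝ) < ‖q‖ := norm_pos_iff.mpr hq0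
  have step : ∀ r : Q, ∀ n : ℕ, ∃ a : B, ‖a‖ ≤ 2 * ‖r‖ ∧ ‖φ a - r‖ < ‖q‖ / 2^(n+1) :=
    fun r n => aux_approx φ hd r (by positivity)
  choose g hg1 hg2 using step
  let r : ℕ → Q := fun n => Nat.rec q (fun n rn => rn - φ (g rn n)) n
  let a : ℕ → B := fun n => g (r n) n
  have hrs : ∀ n, r (n+1) = r n - φ (a n) := fun n => rfl
  have hrb : ∀ n, ‖r n‖ ≤ ‖q‖ / 2^n := by
    intro n
    induction n with
    | zero => simp [r]
    | succ n ih =>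
      calc ‖r (n+1)‖ = ‖φ (a n) - r n‖ := by rw [hrs, norm_sub_rev]
        _ ≤ ‖q‖ / 2^(n+1) := (hg2 _ _).le
  have hab : ∀ n, ‖a n‖ ≤ 2 * ‖q‖ * (1/2)^n := by
    intro n
    calc ‖a n‖ ≤ 2 * ‖r n‖ := hg1 _ _
      _ ≤ 2 * (‖q‖ / 2^n) := by gcongr; exact hrb n
      _ = 2 * ‖q‖ * (1/2)^n := by rw [div_pow, one_pow]; ring
  have hsum : Summable a := by
    refine Summable.of_norm_bounded ?_ hab
    exact (summable_geometric_of_lt_one (by norm_num) (by norm_num)).mul_left _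
  have hφsum : HasSum (fun n => φ (a n)) (φ (∑' n, a n)) :=
    hsum.hasSum.map (φ : B →+ Q) (map_continuous φ)
  have hpartial : ∀ n, ∑ i ∈ Finset.range n, φ (a i) = q - r n := by
    intro n
    induction n with
    | zero => simp [r]
    | succ n ih =>
      rw [Finset.sum_range_succ, ih, hrs]
      abel
  have hrlim : Filter.Tendsto r Filter.atTop (nhds 0) := by
    rw [tendsto_zero_iff_norm_tendsto_zero]
    refine squeeze_zero (fun n => norm_nonneg _) hrb ?_
    have : Filter.Tendsto (fun n : ℕ => ‖q‖ * (1/2)^n) Filter.atTop (nhds (‖q‖ * 0)) :=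
      (tendsto_pow_atTop_nhds_zero_of_lt_one (by norm_num) (by norm_num)).const_mul _
    simpa [div_pow, div_eq_mul_inv, inv_pow] using this
  have hlim2 : Filter.Tendsto (fun n => ∑ i ∈ Finset.range n, φ (a i))
      Filter.atTop (nhds q) := by
    simp only [hpartial]
    simpa using Filter.Tendsto.const_sub q hrlim
  exact ⟨∑' n, a n, tendsto_nhds_unique hφsum.tendsto_sum_nat hlim2⟩

end AuxSurj

noncomputable section

/-- Let `J ◁ A` be a closed two-sided ideal, `C ⊆ A` a sub-C*-algebra
and `K ⊆ J` a sub-C*-algebra containing `C ∩ J` such that the inclusion `C ∩ J ⊆ K` is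
proper. Then `K` is a closed two-sided ideal in `E := C*(K, C)`, and the quotient map
`E → E/K` restricts on `C` to a surjection onto `E/K` with kernel `C ∩ J`; that is, there
is a natural isomorphism `C*(K, C)/K ≅ C/(C ∩ J)`. -/
theorem stmt12 (A : Type u) [NonUnitalCStarAlgebra A]
    (J : NonUnitalStarSubalgebra ℂ A) (hJc : IsClosed (J : Set A)) (hJid : IsIdealIn J ⊤)
    (C : NonUnitalStarSubalgebra ℂ A) (hCc : IsClosed (C : Set A))
    (K : NonUnitalStarSubalgebra ℂ A) (hKc : IsClosed (K : Set A)) (hKJ : K ≤ J)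
    (hCJK : C ⊓ J ≤ K)
    (hproper : ProperlyIncluded ((C ⊓ J : NonUnitalStarSubalgebra ℂ A) : Set A)
      (K : Set A)) :
    let E := (NonUnitalStarAlgebra.adjoin ℂ ((K : Set A) ∪ (C : Set A))).topologicalClosure
    IsIdealIn K E ∧
    ∀ hCE : C ≤ E,
      ∀ (Q : CStarAlgebraBundle.{u}) (p : E →⋆ₙₐ[ℂ] Q.carrier),
        Function.Surjective p → (∀ x : E, p x = 0 ↔ (x : A) ∈ K) →
          Function.Surjective (fun y : C => p ⟨(y : A), hCE y.2⟩) ∧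
          ∀ y : C, p ⟨(y : A), hCE y.2⟩ = 0 ↔ (y : A) ∈ J := by
  intro E
  have hau := hproper.2
  have hKC : ∀ k ∈ K, ∀ c ∈ C, k * c ∈ K := by
    intro k hk c hc
    have hcl : k * c ∈ closure (K : Set A) := by
      rw [Metric.mem_closure_iff]
      intro ε hε
      obtain ⟨e, he, -, -, hee⟩ := hau k hk (ε / (‖c‖ + 1)) (by positivity)
      have heC : e ∈ C := (NonUnitalStarAlgebra.mem_inf.mp he).1
      have heJ : e ∈ J := (NonUnitalStarAlgebra.mem_inf.mp he).2
      have heK : e ∈ K := hCJK he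
      have hecK : e * c ∈ K := hCJK (NonUnitalStarAlgebra.mem_inf.mpr
        ⟨mul_mem heC hc, (hJid.2 c trivial e heJ).2⟩)
      refine ⟨(e * k) * (e * c), mul_mem (mul_mem heK hk) hecK, ?_⟩
      rw [dist_eq_norm]
      have heq : k * c - (e * k) * (e * c) = (k - e * k * e) * c := by noncomm_ring
      rw [heq]
      calc ‖(k - e * k * e) * c‖ ≤ ‖k - e * k * e‖ * ‖c‖ := norm_mul_le _ _
        _ < (ε / (‖c‖ + 1)) * (‖c‖ + 1) := by
            rw [norm_sub_rev]
            exact mul_lt_mul'' hee (by linarith) (norm_nonneg _) (norm_nonneg _)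
        _ = ε := div_mul_cancel₀ _ (by positivity)
    rwa [hKc.closure_eq] at hcl
  have hCK : ∀ c ∈ C, ∀ k ∈ K, c * k ∈ K := by
    intro c hc k hk
    have h := star_mem (hKC (star k) (star_mem hk) (star c) (star_mem hc))
    rwa [star_mul, star_star, star_star] at h
  have hadj : ∀ a ∈ NonUnitalStarAlgebra.adjoin ℂ ((K : Set A) ∪ (C : Set A)),
      (∀ x ∈ K, a * x ∈ K) ∧ ∀ x ∈ K, x * a ∈ K := by
    intro a ha
    induction ha using NonUnitalStarAlgebra.adjoin_induction with
    | mem a ha =>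
      rcases ha with ha | ha
      · exact ⟨fun x hx => mul_mem ha hx, fun x hx => mul_mem hx ha⟩
      · exact ⟨fun x hx => hCK a ha x hx, fun x hx => hKC x hx a ha⟩
    | add a b _ _ iha ihb =>
      exact ⟨fun x hx => by rw [add_mul]; exact add_mem (iha.1 x hx) (ihb.1 x hx),
        fun x hx => by rw [mul_add]; exact add_mem (iha.2 x hx) (ihb.2 x hx)⟩
    | zero =>
      exact ⟨fun x hx => by rw [zero_mul]; exact zero_mem K,
        fun x hx => by rw [mul_zero]; exact zero_mem K⟩
    | mul a b _ _ iha ihb =>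
      exact ⟨fun x hx => by rw [mul_assoc]; exact iha.1 _ (ihb.1 x hx),
        fun x hx => by rw [← mul_assoc]; exact ihb.2 _ (iha.2 x hx)⟩
    | smul r a _ iha =>
      exact ⟨fun x hx => by rw [smul_mul_assoc]; exact SMulMemClass.smul_mem r (iha.1 x hx),
        fun x hx => by rw [mul_smul_comm]; exact SMulMemClass.smul_mem r (iha.2 x hx)⟩
    | star a _ iha =>
      constructor
      · intro x hx
        have h := star_mem (iha.2 (star x) (star_mem hx))
        rwa [star_mul, star_star] at h
      · intro x hx
        have h := star_mem (iha.1 (star x) (star_mem hx))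
        rwa [star_mul, star_star] at h
  have hEmul : ∀ a ∈ E, ∀ x ∈ K, a * x ∈ K ∧ x * a ∈ K := by
    intro a haE x hx
    have haE' : a ∈ closure
        ((NonUnitalStarAlgebra.adjoin ℂ ((K : Set A) ∪ (C : Set A)) : Set A)) := haE
    constructor
    · have h : a * x ∈ closure (K : Set A) :=
        map_mem_closure (f := fun b : A => b * x) (continuous_mul_right x) haE'
          fun b hb => (hadj b hb).1 x hx
      rwa [hKc.closure_eq] at h
    · have h : x * a ∈ closure (K : Set A) :=
        map_mem_closure (f := fun b : A => x * b) (continuous_mul_left x) haE'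
          fun b hb => (hadj b hb).2 x hx
      rwa [hKc.closure_eq] at h
  have hKE : K ≤ E := fun x hx =>
    NonUnitalStarSubalgebra.le_topologicalClosure _
      (NonUnitalStarAlgebra.subset_adjoin ℂ _ (Or.inl hx))
  refine ⟨⟨hKE, fun a ha x hx => hEmul a ha x hx⟩, ?_⟩
  intro hCE Q p hpsurj hker
  haveI hEc : IsClosed (E : Set A) :=
    NonUnitalStarSubalgebra.isClosed_topologicalClosure _
  haveI hCc' : IsClosed (C : Set A) := hCc
  set ψ : C →⋆ₙₐ[ℂ] Q.carrier := p.comp (NonUnitalStarSubalgebra.inclusion hCE) with hψ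
  have hdr : DenseRange ψ := by
    rw [Metric.denseRange_iff]
    intro q ε hε
    obtain ⟨e, rfl⟩ := hpsurj q
    have he' : (e : A) ∈ closure
        ((NonUnitalStarAlgebra.adjoin ℂ ((K : Set A) ∪ (C : Set A)) : Set A)) := e.2
    rw [Metric.mem_closure_iff] at he'
    obtain ⟨z, hz, hdz⟩ := he' ε hε
    have hzE : z ∈ E := NonUnitalStarSubalgebra.le_topologicalClosure _ hz
    obtain ⟨k, hk, c, hc, hzkc⟩ : ∃ k ∈ K, ∃ c ∈ C, z = k + c := by
      clear hdz hzE
      induction hz using NonUnitalStarAlgebra.adjoin_induction with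
      | mem a ha =>
        rcases ha with ha | ha
        · exact ⟨a, ha, 0, zero_mem C, (add_zero a).symm⟩
        · exact ⟨0, zero_mem K, a, ha, (zero_add a).symm⟩
      | add a b _ _ iha ihb =>
        obtain ⟨k, hk, c, hc, rfl⟩ := iha
        obtain ⟨k', hk', c', hc', rfl⟩ := ihb
        exact ⟨k + k', add_mem hk hk', c + c', add_mem hc hc', by abel⟩
      | zero => exact ⟨0, zero_mem K, 0, zero_mem C, by simp⟩
      | mul a b _ _ iha ihb =>
        obtain ⟨k, hk, c, hc, rfl⟩ := iha
        obtain ⟨k', hk', c', hc', rfl⟩ := ihb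
        refine ⟨k * k' + k * c' + c * k',
          add_mem (add_mem (mul_mem hk hk') (hKC k hk c' hc')) (hCK c hc k' hk'),
          c * c', mul_mem hc hc', by noncomm_ring⟩
      | smul r a _ iha =>
        obtain ⟨k, hk, c, hc, rfl⟩ := iha
        exact ⟨r • k, SMulMemClass.smul_mem r hk, r • c, SMulMemClass.smul_mem r hc,
          by rw [smul_add]⟩
      | star a _ iha =>
        obtain ⟨k, hk, c, hc, rfl⟩ := iha
        exact ⟨star k, star_mem hk, star c, star_mem hc, by rw [star_add]⟩
    refine ⟨⟨c, hc⟩, ?_⟩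
    have hsplit : (⟨z, hzE⟩ : E) = ⟨k, hKE hk⟩ + ⟨c, hCE hc⟩ := Subtype.ext hzkc
    have hpck : p ⟨z, hzE⟩ = ψ ⟨c, hc⟩ := by
      rw [hsplit, map_add, (hker _).mpr hk, zero_add]
      rfl
    rw [dist_eq_norm, ← hpck, ← map_sub]
    calc ‖p (e - ⟨z, hzE⟩)‖ ≤ ‖e - (⟨z, hzE⟩ : E)‖ := NonUnitalStarAlgHom.norm_apply_le p _
      _ = ‖(e : A) - z‖ := rfl
      _ < ε := by rw [← dist_eq_norm]; exact hdz
  have hψsurj : Function.Surjective ψ := aux_surj ψ hdr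
  constructor
  · intro q
    obtain ⟨y, hy⟩ := hψsurj q
    exact ⟨y, hy⟩
  · intro y
    constructor
    · intro h
      exact hKJ ((hker _).mp h)
    · intro h
      exact (hker _).mpr (hCJK (NonUnitalStarAlgebra.mem_inf.mpr ⟨y.2, h⟩))


end
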